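/- arXiv:1601.07010 — 2 statements merged into one kernel-verified Lean document; each statement's English description precedes it below -/
import Mathlib

section
/- Let A = [A^1|...|A^M] ∈ ℂ^{D×N} and B = [(A^1)_d | ... | (A^M)_d]. Then for all d ∈ {1,...,D}, ‖(B)_d − A‖_F ≤ ‖(B)_d − B‖_F + ‖B − A‖_F ≤ 3 ‖(A)_d − A‖_F. -/
open Matrix

/-- Frobenius norm of a complex matrix. -/
noncomputable def frob {m n : Type*} [Fintype m] [Fintype n] (M : Matrix m n ℂ) : ℝ :=
  Real.sqrt (∑ i, ∑ j, ‖M i j‖ ^ 2)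

/-- `B` is a best rank-`d` approximation of `A` in Frobenius norm. -/
def IsBestRankApprox {m n : Type*} [Fintype m] [Fintype n] (d : ℕ)
    (A B : Matrix m n ℂ) : Prop :=
  B.rank ≤ d ∧ ∀ C : Matrix m n ℂ, C.rank ≤ d → frob (B - A) ≤ frob (C - A)

/-- The singular values of `M` : nonnegative square roots of the eigenvalues of `M * Mᴴ`
(unsorted enumeration). -/
noncomputable def singVals {D : ℕ} {n : Type*} [Fintype n] (M : Matrix (Fin D) n ℂ) :
    Fin D → ℝ :=
  fun i => Real.sqrt ((Matrix.isHermitian_mul_conjTranspose_self M).eigenvalues i)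

/-- `C` is a scaled left-singular-vector form of `M`, i.e. `C = U Σ = M V` for some
SVD `M = U Σ Vᴴ` of `M`: equivalently `C = M V` with `V` unitary and `Cᴴ C` diagonal with
nonnegative real entries. -/
def IsScaledLeftSV {D : ℕ} {n : Type*} [Fintype n] [DecidableEq n]
    (M C : Matrix (Fin D) n ℂ) : Prop :=
  ∃ V ∈ Matrix.unitaryGroup n ℂ, C = M * V ∧
    ∃ t : n → ℝ, (∀ j, 0 ≤ t j) ∧ Cᴴ * C = Matrix.diagonal (fun j => (t j : ℂ))

section aux
variable {m n : Type*} [Fintype m] [Fintype n]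

lemma frob_eq_norm (X : Matrix m n ℂ) :
    frob X = ‖(WithLp.equiv 2 _).symm (fun p : m × n => X p.1 p.2)‖ := by
  rw [EuclideanSpace.norm_eq, frob, Fintype.sum_prod_type]
  rfl

lemma frob_nonneg (X : Matrix m n ℂ) : 0 ≤ frob X := Real.sqrt_nonneg _

lemma frob_sub_triangle (X Y Z : Matrix m n ℂ) :
    frob (X - Z) ≤ frob (X - Y) + frob (Y - Z) := by
  rw [frob_eq_norm, frob_eq_norm, frob_eq_norm]
  have h : (WithLp.equiv 2 (m × n → ℂ)).symm (fun p : m × n => (X - Z) p.1 p.2)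
      = (WithLp.equiv 2 (m × n → ℂ)).symm (fun p : m × n => (X - Y) p.1 p.2)
        + (WithLp.equiv 2 (m × n → ℂ)).symm (fun p : m × n => (Y - Z) p.1 p.2) := by
    ext p; simp [Matrix.sub_apply]
  rw [h]
  exact norm_add_le _ _

lemma frob_sub_comm (X Y : Matrix m n ℂ) : frob (X - Y) = frob (Y - X) := by
  unfold frob
  congr 1
  refine Finset.sum_congr rfl fun i _ => Finset.sum_congr rfl fun j _ => ?_
  rw [Matrix.sub_apply, Matrix.sub_apply, norm_sub_rev]

lemma frob_sq (X : Matrix m n ℂ) : frob X ^ 2 = ∑ i, ∑ j, ‖X i j‖ ^ 2 := by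
  rw [frob, Real.sq_sqrt]
  positivity

end aux

lemma frob_sq_blocks {D M : ℕ} {N : Fin M → ℕ}
    (X : Matrix (Fin D) ((i : Fin M) × Fin (N i)) ℂ) :
    frob X ^ 2 = ∑ i : Fin M, frob (Matrix.of fun r c => X r ⟨i, c⟩) ^ 2 := by
  simp only [frob_sq, Matrix.of_apply]
  have h : ∀ r, ∑ j : (i : Fin M) × Fin (N i), ‖X r j‖ ^ 2
      = ∑ i : Fin M, ∑ c, ‖X r ⟨i, c⟩‖ ^ 2 := by
    intro r
    rw [← Finset.univ_sigma_univ, Finset.sum_sigma]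
  simp only [h]
  rw [Finset.sum_comm]

lemma rank_block_le {D M : ℕ} {N : Fin M → ℕ}
    (X : Matrix (Fin D) ((i : Fin M) × Fin (N i)) ℂ) (i : Fin M) :
    (Matrix.of fun r c => X r ⟨i, c⟩ : Matrix (Fin D) (Fin (N i)) ℂ).rank ≤ X.rank := by
  have h : (Matrix.of fun r c => X r ⟨i, c⟩ : Matrix (Fin D) (Fin (N i)) ℂ) =
      X * (Matrix.of fun j c => if j = ⟨i, c⟩ then (1 : ℂ) else 0) := by
    ext r c
    show _ = ∑ j, X r j * (if j = ⟨i, c⟩ then (1 : ℂ) else 0)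
    simp [Matrix.mul_apply]
  rw [h]
  exact Matrix.rank_mul_le_left _ _

lemma frob_le_of_sq_le_sq {m n : Type*} [Fintype m] [Fintype n]
    (X Y : Matrix m n ℂ) (h : frob X ^ 2 ≤ frob Y ^ 2) : frob X ≤ frob Y := by
  have := Real.sqrt_le_sqrt h
  rwa [Real.sqrt_sq (frob_nonneg X), Real.sqrt_sq (frob_nonneg Y)] at this

/-- With `B = [(A^1)_d | ... | (A^M)_d]`, for all `d ∈ {1,...,D}`,
`‖(B)_d − A‖_F ≤ ‖(B)_d − B‖_F + ‖B − A‖_F ≤ 3 ‖(A)_d − A‖_F`. -/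
theorem stmt6 {D M : ℕ} {N : Fin M → ℕ} (d : ℕ) (hd1 : 1 ≤ d) (hdD : d ≤ D)
    (A B : Matrix (Fin D) ((i : Fin M) × Fin (N i)) ℂ)
    (hB : ∀ i, IsBestRankApprox d (Matrix.of fun r c => A r ⟨i, c⟩)
            (Matrix.of fun r c => B r ⟨i, c⟩))
    (Ad : Matrix (Fin D) ((i : Fin M) × Fin (N i)) ℂ)
    (hAd : IsBestRankApprox d A Ad)
    (Bd : Matrix (Fin D) ((i : Fin M) × Fin (N i)) ℂ)
    (hBd : IsBestRankApprox d B Bd) :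
    frob (Bd - A) ≤ frob (Bd - B) + frob (B - A) ∧
    frob (Bd - B) + frob (B - A) ≤ 3 * frob (Ad - A) := by
  refine ⟨frob_sub_triangle Bd B A, ?_⟩
  -- step 1 : frob (B - A) ≤ frob (Ad - A)
  have hBA : frob (B - A) ≤ frob (Ad - A) := by
    refine frob_le_of_sq_le_sq _ _ ?_
    rw [frob_sq_blocks (B - A), frob_sq_blocks (Ad - A)]
    refine Finset.sum_le_sum fun i _ => ?_
    have hsplit : ∀ (Z : Matrix (Fin D) ((i : Fin M) × Fin (N i)) ℂ),
        (Matrix.of fun r c => (Z - A) r ⟨i, c⟩ : Matrix (Fin D) (Fin (N i)) ℂ)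
          = (Matrix.of fun r c => Z r ⟨i, c⟩) - (Matrix.of fun r c => A r ⟨i, c⟩) := by
      intro Z; ext r c; simp
    rw [hsplit B, hsplit Ad]
    have hle : frob ((Matrix.of fun r c => B r ⟨i, c⟩) - (Matrix.of fun r c => A r ⟨i, c⟩))
        ≤ frob ((Matrix.of fun r c => Ad r ⟨i, c⟩) - (Matrix.of fun r c => A r ⟨i, c⟩)) :=
      (hB i).2 _ (le_trans (rank_block_le Ad i) hAd.1)
    exact pow_le_pow_left₀ (frob_nonneg _) hle 2
  -- step 2 : frob (Bd - B) ≤ frob (Ad - B)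
  have h2 : frob (Bd - B) ≤ frob (Ad - B) := hBd.2 Ad hAd.1
  have h3 : frob (Ad - B) ≤ frob (Ad - A) + frob (A - B) := frob_sub_triangle Ad A B
  have h4 : frob (A - B) = frob (B - A) := frob_sub_comm A B
  linarith
end

section
/- Let X, Y ∈ ℂ^{D×N}. Then for every d ∈ {1,...,D}, √(Σ_{j=d+1}^{D} σ_j(X+Y)²) ≤ √2 √(Σ_{j=d+1}^{D} σ_j(X)²) + √2 ‖Y‖_F. -/
open Matrix

open Finset
open scoped ComplexOrder

noncomputable def F2 {m n : Type*} [Fintype m] [Fintype n] (M : Matrix m n ℂ) : ℝ :=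
  (Matrix.trace (M * Mᴴ)).re

lemma F2_eq_sum {m n : Type*} [Fintype m] [Fintype n] (M : Matrix m n ℂ) :
    F2 M = ∑ i, ∑ j, ‖M i j‖ ^ 2 := by
  simp only [F2, Matrix.trace, Matrix.diag, Matrix.mul_apply, Matrix.conjTranspose_apply,
    Complex.re_sum]
  congr 1; ext i; congr 1; ext j
  rw [show M i j * star (M i j) = M i j * (starRingEnd ℂ) (M i j) from rfl, Complex.mul_conj]
  rw [Complex.ofReal_re, Complex.normSq_eq_norm_sq]

lemma F2_nonneg {m n : Type*} [Fintype m] [Fintype n] (M : Matrix m n ℂ) : 0 ≤ F2 M := by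
  rw [F2_eq_sum]
  exact Finset.sum_nonneg fun i _ => Finset.sum_nonneg fun j _ => sq_nonneg _

lemma frob_eq_sqrt_F2 {m n : Type*} [Fintype m] [Fintype n] (M : Matrix m n ℂ) :
    frob M = Real.sqrt (F2 M) := by rw [frob, F2_eq_sum]

-- trace of U * diagonal g * star U
lemma trace_UDU {n : Type*} [Fintype n] [DecidableEq n] {U : Matrix n n ℂ}
    (hU : star U * U = 1) (g : n → ℂ) :
    Matrix.trace (U * Matrix.diagonal g * star U) = ∑ j, g j := by
  rw [Matrix.trace_mul_comm, ← Matrix.mul_assoc, hU, Matrix.one_mul, Matrix.trace_diagonal]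

lemma UDU_mul_UDU {n : Type*} [Fintype n] [DecidableEq n] {U : Matrix n n ℂ}
    (hU : star U * U = 1) (g h : n → ℂ) :
    (U * Matrix.diagonal g * star U) * (U * Matrix.diagonal h * star U)
      = U * Matrix.diagonal (fun j => g j * h j) * star U := by
  have : Matrix.diagonal g * (star U * U) * Matrix.diagonal h = Matrix.diagonal fun j => g j * h j := by
    rw [hU, Matrix.mul_one, Matrix.diagonal_mul_diagonal]
  calc (U * Matrix.diagonal g * star U) * (U * Matrix.diagonal h * star U)
      = U * (Matrix.diagonal g * (star U * U) * Matrix.diagonal h) * star U := by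
        simp only [Matrix.mul_assoc]
    _ = U * Matrix.diagonal (fun j => g j * h j) * star U := by rw [this]

lemma diag_real_herm {n : Type*} [Fintype n] [DecidableEq n] (g : n → ℝ) :
    (Matrix.diagonal (fun j => (g j : ℂ)))ᴴ = Matrix.diagonal (fun j => (g j : ℂ)) := by
  rw [Matrix.diagonal_conjTranspose]
  have : (star fun j => (g j : ℂ)) = fun j => (g j : ℂ) := by
    funext j
    rw [Pi.star_apply, Complex.star_def, Complex.conj_ofReal]
  rw [this]

lemma UDU_herm {n : Type*} [Fintype n] [DecidableEq n] (U : Matrix n n ℂ) (g : n → ℝ) :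
    (U * Matrix.diagonal (fun j => (g j : ℂ)) * star U)ᴴ
      = U * Matrix.diagonal (fun j => (g j : ℂ)) * star U := by
  rw [Matrix.conjTranspose_mul, Matrix.conjTranspose_mul, diag_real_herm,
    ← Matrix.star_eq_conjTranspose U, ← Matrix.star_eq_conjTranspose (star U), star_star,
    Matrix.mul_assoc]

-- F2 (Q * R) = re tr (R * Rᴴ * Q) for Hermitian idempotent Q
lemma F2_idem_mul {n m : Type*} [Fintype n] [Fintype m] {Q : Matrix n n ℂ}
    (hQh : Qᴴ = Q) (hQQ : Q * Q = Q) (R : Matrix n m ℂ) :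
    F2 (Q * R) = (Matrix.trace (R * Rᴴ * Q)).re := by
  rw [F2, Matrix.conjTranspose_mul, hQh]
  have h1 : Q * R * (Rᴴ * Q) = Q * (R * Rᴴ * Q) := by simp only [Matrix.mul_assoc]
  rw [h1, Matrix.trace_mul_comm, Matrix.mul_assoc, hQQ]

lemma F2_proj_split {n m : Type*} [Fintype n] [Fintype m] [DecidableEq n] {Q : Matrix n n ℂ}
    (hQh : Qᴴ = Q) (hQQ : Q * Q = Q) (R : Matrix n m ℂ) :
    F2 (Q * R) + F2 ((1 - Q) * R) = F2 R := by
  have hQh' : (1 - Q)ᴴ = 1 - Q := by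
    rw [Matrix.conjTranspose_sub, hQh, Matrix.conjTranspose_one]
  have hQQ' : (1 - Q) * (1 - Q) = 1 - Q := by
    rw [Matrix.sub_mul, Matrix.mul_sub, Matrix.mul_sub, hQQ]
    simp only [Matrix.one_mul, Matrix.mul_one]
    abel
  have h2 : R * Rᴴ * Q + R * Rᴴ * (1 - Q) = R * Rᴴ := by
    rw [← Matrix.mul_add]
    simp
  rw [F2_idem_mul hQh hQQ R, F2_idem_mul hQh' hQQ' R, ← Complex.add_re, ← Matrix.trace_add, h2]
  rfl

-- nonnegativity of star v ⬝ᵥ v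
lemma re_dot_star_self_nonneg {n : Type*} [Fintype n] (v : n → ℂ) :
    0 ≤ (dotProduct (star v) v).re := by
  rw [dotProduct, Complex.re_sum]
  refine Finset.sum_nonneg fun a _ => ?_
  rw [Pi.star_apply, Complex.star_def, mul_comm, Complex.mul_conj, Complex.ofReal_re]
  exact Complex.normSq_nonneg _

lemma re_dot_idem_nonneg {n : Type*} [Fintype n] {Q : Matrix n n ℂ}
    (hQh : Qᴴ = Q) (hQQ : Q * Q = Q) (v : n → ℂ) :
    0 ≤ (dotProduct (star v) (Q *ᵥ v)).re := by
  have h0 : star v ᵥ* Q = star (Q *ᵥ v) := by rw [Matrix.star_mulVec, hQh]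
  have h1 : dotProduct (star v) (Q *ᵥ v)
      = dotProduct (star (Q *ᵥ v)) (Q *ᵥ v) := by
    calc dotProduct (star v) (Q *ᵥ v)
        = dotProduct (star v) ((Q * Q) *ᵥ v) := by rw [hQQ]
      _ = dotProduct (star v) (Q *ᵥ (Q *ᵥ v)) := by rw [Matrix.mulVec_mulVec]
      _ = dotProduct (star v ᵥ* Q) (Q *ᵥ v) := by rw [Matrix.dotProduct_mulVec]
      _ = dotProduct (star (Q *ᵥ v)) (Q *ᵥ v) := by rw [h0]
  rw [h1]
  exact re_dot_star_self_nonneg _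

lemma re_dot_idem_le {n : Type*} [Fintype n] [DecidableEq n] {Q : Matrix n n ℂ}
    (hQh : Qᴴ = Q) (hQQ : Q * Q = Q) (v : n → ℂ) :
    (dotProduct (star v) (Q *ᵥ v)).re ≤ (dotProduct (star v) v).re := by
  have hQh' : (1 - Q)ᴴ = 1 - Q := by
    rw [Matrix.conjTranspose_sub, hQh, Matrix.conjTranspose_one]
  have hQQ' : (1 - Q) * (1 - Q) = 1 - Q := by
    rw [Matrix.sub_mul, Matrix.mul_sub, Matrix.mul_sub, hQQ]
    simp only [Matrix.one_mul, Matrix.mul_one]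
    abel
  have := re_dot_idem_nonneg hQh' hQQ' v
  rw [Matrix.sub_mulVec, Matrix.one_mulVec, dotProduct_sub, Complex.sub_re] at this
  linarith

-- (star W * Q * W) j j as a dot product with the j-th column of W
lemma star_mul_mul_diag {n : Type*} [Fintype n] (W Q : Matrix n n ℂ) (j : n) :
    (star W * Q * W) j j
      = dotProduct (star (fun a => W a j)) (Q *ᵥ (fun a => W a j)) := by
  simp only [Matrix.mul_apply, dotProduct, Matrix.mulVec, dotProduct,
    Matrix.star_apply, Pi.star_apply, Matrix.star_eq_conjTranspose, Matrix.conjTranspose_apply,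
    Finset.sum_mul, Finset.mul_sum]
  rw [Finset.sum_comm]
  refine Finset.sum_congr rfl fun a _ => Finset.sum_congr rfl fun b _ => ?_
  ring

lemma star_mul_self_diag {n : Type*} [Fintype n] (W : Matrix n n ℂ) (j : n) :
    (star W * W) j j = dotProduct (star (fun a => W a j)) (fun a => W a j) := by
  simp only [Matrix.mul_apply, dotProduct, Pi.star_apply,
    Matrix.star_eq_conjTranspose, Matrix.conjTranspose_apply]

-- trace of diagonal * S
lemma trace_diagonal_mul {n : Type*} [Fintype n] [DecidableEq n] (g : n → ℂ) (S : Matrix n n ℂ) :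
    Matrix.trace (Matrix.diagonal g * S) = ∑ j, g j * S j j := by
  simp only [Matrix.trace, Matrix.diag, Matrix.diagonal_mul]

lemma card_filter_lt (D d : ℕ) (hdD : d ≤ D) :
    (Finset.univ.filter (fun i : Fin D => (i : ℕ) < d)).card = d := by
  have : (Finset.univ.filter (fun i : Fin D => (i : ℕ) < d))
      = (Finset.range d).attachFin (fun m hm => lt_of_lt_of_le (Finset.mem_range.mp hm) hdD) := by
    ext i
    simp [Finset.mem_attachFin]
  rw [this, Finset.card_attachFin, Finset.card_range]

-- the majorization lemma
lemma majorization {D : ℕ} (d : ℕ) (hdD : d ≤ D) (m b : Fin D → ℝ)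
    (hm : Antitone m) (hm0 : ∀ i, 0 ≤ m i) (hb0 : ∀ i, 0 ≤ b i) (hb1 : ∀ i, b i ≤ 1)
    (hsb : ∑ i, b i ≤ d) :
    ∑ i, m i * b i ≤ ∑ i ∈ Finset.univ.filter (fun i : Fin D => (i : ℕ) < d), m i := by
  classical
  set s := Finset.univ.filter (fun i : Fin D => (i : ℕ) < d) with hs
  set t := Finset.univ.filter (fun i : Fin D => d ≤ (i : ℕ)) with ht
  have hst : ∀ i : Fin D, i ∈ s ↔ ¬ (i ∈ t) := by
    intro i; simp only [hs, ht, Finset.mem_filter, Finset.mem_univ, true_and]; omega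
  have hsplit : ∀ g : Fin D → ℝ, ∑ i, g i = ∑ i ∈ s, g i + ∑ i ∈ t, g i := by
    intro g
    rw [← Finset.sum_filter_add_sum_filter_not Finset.univ (fun i : Fin D => (i : ℕ) < d) g]
    congr 1
    apply Finset.sum_congr _ (fun _ _ => rfl)
    ext i; simp [ht, Nat.not_lt]
  have hcard : (s.card : ℝ) = d := by rw [hs, card_filter_lt D d hdD]
  have key : ∑ i ∈ t, m i * b i ≤ ∑ i ∈ s, m i * (1 - b i) := by
    rcases Nat.lt_or_ge d D with hdlt | hge
    · set i₀ : Fin D := ⟨d, hdlt⟩ with hi₀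
      have step1 : ∑ i ∈ t, m i * b i ≤ ∑ i ∈ t, m i₀ * b i := by
        refine Finset.sum_le_sum fun i hi => ?_
        have : d ≤ (i : ℕ) := by simpa [ht] using hi
        exact mul_le_mul_of_nonneg_right (hm (by simpa [hi₀, Fin.le_def] using this)) (hb0 i)
      have step2 : ∑ i ∈ t, m i₀ * b i ≤ ∑ i ∈ s, m i₀ * (1 - b i) := by
        rw [← Finset.mul_sum, ← Finset.mul_sum]
        refine mul_le_mul_of_nonneg_left ?_ (hm0 i₀)
        have h1 : ∑ i ∈ s, (1 - b i) = (s.card : ℝ) - ∑ i ∈ s, b i := by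
          rw [Finset.sum_sub_distrib]; simp
        have h2 : ∑ i ∈ s, b i + ∑ i ∈ t, b i ≤ d := by rw [← hsplit b]; exact hsb
        rw [h1, hcard]
        linarith
      have step3 : ∑ i ∈ s, m i₀ * (1 - b i) ≤ ∑ i ∈ s, m i * (1 - b i) := by
        refine Finset.sum_le_sum fun i hi => ?_
        have hid : (i : ℕ) < d := by simpa [hs] using hi
        refine mul_le_mul_of_nonneg_right (hm ?_) (by linarith [hb1 i])
        simp [hi₀, Fin.le_def]
        omega
      linarith
    · have : t = ∅ := by
        ext i
        simp only [ht, Finset.mem_filter, Finset.mem_univ, true_and, Finset.notMem_empty,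
          iff_false]
        omega
      rw [this]
      simp only [Finset.sum_empty]
      exact Finset.sum_nonneg fun i hi => mul_nonneg (hm0 i) (by linarith [hb1 i])
  have expand : ∑ i, m i * b i = ∑ i ∈ s, m i * b i + ∑ i ∈ t, m i * b i := hsplit _
  have final : ∑ i ∈ s, m i * b i + ∑ i ∈ s, m i * (1 - b i) = ∑ i ∈ s, m i := by
    rw [← Finset.sum_add_distrib]
    apply Finset.sum_congr rfl
    intros; ring
  linarith

-- triangle inequality for frob
lemma frob_add_le {m n : Type*} [Fintype m] [Fintype n] (S T : Matrix m n ℂ) :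
    frob (S + T) ≤ frob S + frob T := by
  classical
  have key : ∀ M : Matrix m n ℂ,
      frob M = ‖(WithLp.equiv 2 ((m × n) → ℝ)).symm (fun p => ‖M p.1 p.2‖)‖ := by
    intro M
    rw [EuclideanSpace.norm_eq, frob]
    congr 1
    rw [← Finset.sum_product']
    refine Finset.sum_congr rfl fun p _ => by simp
  rw [key, key S, key T]
  refine le_trans ?_ (norm_add_le _ _)
  have h1 : ∀ (x y : EuclideanSpace ℝ (m × n)), (∀ p, |x p| ≤ |y p|) → ‖x‖ ≤ ‖y‖ := by
    intro x y h
    rw [EuclideanSpace.norm_eq, EuclideanSpace.norm_eq]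
    apply Real.sqrt_le_sqrt
    refine Finset.sum_le_sum fun p _ => ?_
    have := h p
    simp only [Real.norm_eq_abs]
    nlinarith [abs_nonneg (x p), abs_nonneg (y p)]
  apply h1
  intro p
  simp only [PiLp.add_apply, WithLp.equiv_symm_apply, PiLp.toLp_apply]
  rw [abs_of_nonneg (norm_nonneg _),
    abs_of_nonneg (add_nonneg (norm_nonneg _) (norm_nonneg _))]
  exact norm_add_le _ _

-- sums over filters via a permutation
lemma sum_perm_filter {D d : ℕ} (g : Fin D → ℝ) (e : Equiv.Perm (Fin D)) :
    ∑ j, g j * (if ((e.symm j : Fin D) : ℕ) < d then (1:ℝ) else 0)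
      = ∑ i ∈ Finset.univ.filter (fun i : Fin D => (i : ℕ) < d), g (e i) := by
  rw [← Equiv.sum_comp e (fun j => g j * (if ((e.symm j : Fin D) : ℕ) < d then (1:ℝ) else 0)),
    Finset.sum_filter]
  refine Finset.sum_congr rfl fun i _ => ?_
  rw [Equiv.symm_apply_apply]
  by_cases h : (i : ℕ) < d <;> simp [h]

lemma sum_split_perm {D d : ℕ} (g : Fin D → ℝ) (e : Equiv.Perm (Fin D)) :
    ∑ j, g j = ∑ i ∈ Finset.univ.filter (fun i : Fin D => (i : ℕ) < d), g (e i)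
      + ∑ i ∈ Finset.univ.filter (fun i : Fin D => d ≤ (i : ℕ)), g (e i) := by
  rw [← Equiv.sum_comp e g,
    ← Finset.sum_filter_add_sum_filter_not Finset.univ (fun i : Fin D => (i : ℕ) < d)
      (fun i => g (e i))]
  congr 1
  apply Finset.sum_congr _ (fun _ _ => rfl)
  ext i
  simp [Nat.not_lt]

/-- For `X, Y ∈ ℂ^{D×N}` and every `d ∈ {1,...,D}`:
`√(Σ_{j=d+1}^D σ_j(X+Y)²) ≤ √2 √(Σ_{j=d+1}^D σ_j(X)²) + √2 ‖Y‖_F`. -/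
theorem stmt9 {D N : ℕ} (d : ℕ) (hd1 : 1 ≤ d) (hdD : d ≤ D)
    (X Y : Matrix (Fin D) (Fin N) ℂ)
    (σX σXY : Fin D → ℝ) (hσX : Antitone σX) (hσXY : Antitone σXY)
    (hX : ∃ e : Equiv.Perm (Fin D), σX = singVals X ∘ e)
    (hXY : ∃ e : Equiv.Perm (Fin D), σXY = singVals (X + Y) ∘ e) :
    Real.sqrt (∑ i ∈ Finset.univ.filter (fun i : Fin D => d ≤ (i : ℕ)), σXY i ^ 2) ≤
      Real.sqrt 2 * Real.sqrt (∑ i ∈ Finset.univ.filter (fun i : Fin D => d ≤ (i : ℕ)), σX i ^ 2)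
        + Real.sqrt 2 * frob Y := by
  classical
  obtain ⟨e, he⟩ := hX
  obtain ⟨f, hf⟩ := hXY
  set hA := Matrix.isHermitian_mul_conjTranspose_self X with hAdef
  set hB := Matrix.isHermitian_mul_conjTranspose_self (X + Y) with hBdef
  set lam := hA.eigenvalues with hlamdef
  set mu := hB.eigenvalues with hmudef
  have hlam0 : ∀ j, 0 ≤ lam j := fun j =>
    (Matrix.posSemidef_self_mul_conjTranspose X).eigenvalues_nonneg j
  have hmu0 : ∀ j, 0 ≤ mu j := fun j =>
    (Matrix.posSemidef_self_mul_conjTranspose (X + Y)).eigenvalues_nonneg j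
  set U := (hA.eigenvectorUnitary : Matrix (Fin D) (Fin D) ℂ) with hUdef
  set W := (hB.eigenvectorUnitary : Matrix (Fin D) (Fin D) ℂ) with hWdef
  have hU1 : star U * U = 1 := hA.eigenvectorUnitary.2.1
  have hU2 : U * star U = 1 := hA.eigenvectorUnitary.2.2
  have hW1 : star W * W = 1 := hB.eigenvectorUnitary.2.1
  have hW2 : W * star W = 1 := hB.eigenvectorUnitary.2.2
  set χ : Fin D → ℝ := fun j => if ((e.symm j : Fin D) : ℕ) < d then 1 else 0 with hχdef
  set P := U * Matrix.diagonal (fun j => (χ j : ℂ)) * star U with hPdef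
  have hPh : Pᴴ = P := UDU_herm U χ
  have hPP : P * P = P := by
    rw [hPdef, UDU_mul_UDU hU1]
    have hxx : (fun j => (χ j : ℂ) * (χ j : ℂ)) = fun j => (χ j : ℂ) := by
      funext j
      by_cases h : ((e.symm j : Fin D) : ℕ) < d <;> simp [hχdef, h]
    rw [hxx]
  have hPh' : (1 - P)ᴴ = 1 - P := by
    rw [Matrix.conjTranspose_sub, hPh, Matrix.conjTranspose_one]
  have hPP' : (1 - P) * (1 - P) = 1 - P := by
    rw [Matrix.sub_mul, Matrix.mul_sub, Matrix.mul_sub, hPP]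
    simp only [Matrix.one_mul, Matrix.mul_one]
    abel
  have hAspec : X * Xᴴ = U * Matrix.diagonal (fun j => (lam j : ℂ)) * star U :=
    hA.spectral_theorem
  have hBspec : (X + Y) * (X + Y)ᴴ = W * Matrix.diagonal (fun j => (mu j : ℂ)) * star W :=
    hB.spectral_theorem
  -- the X-side computation
  have hF2X : F2 ((1 - P) * X)
      = ∑ i ∈ Finset.univ.filter (fun i : Fin D => d ≤ (i : ℕ)), lam (e i) := by
    rw [F2_idem_mul hPh' hPP' X, Matrix.mul_sub, Matrix.mul_one, Matrix.trace_sub,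
      Complex.sub_re, hAspec, hPdef, UDU_mul_UDU hU1, trace_UDU hU1, trace_UDU hU1]
    have h1 : (∑ j, ((lam j : ℂ))).re = ∑ j, lam j := by
      rw [Complex.re_sum]; simp
    have h2 : (∑ j, ((lam j : ℂ) * (χ j : ℂ))).re = ∑ j, lam j * χ j := by
      rw [Complex.re_sum]
      refine Finset.sum_congr rfl fun j _ => ?_
      rw [← Complex.ofReal_mul, Complex.ofReal_re]
    rw [h1, h2, hχdef]
    rw [sum_perm_filter lam e, sum_split_perm (d := d) lam e]
    ring
  -- the (X+Y)-side computation
  set c : Fin D → ℝ := fun j => ((star W * P * W) j j).re with hcdef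
  have hc0 : ∀ j, 0 ≤ c j := by
    intro j
    show 0 ≤ ((star W * P * W) j j).re
    rw [star_mul_mul_diag]
    exact re_dot_idem_nonneg hPh hPP _
  have hc1 : ∀ j, c j ≤ 1 := by
    intro j
    have h1 := re_dot_idem_le hPh hPP (fun a => W a j)
    rw [← star_mul_mul_diag W P j, ← star_mul_self_diag W j, hW1] at h1
    simpa using h1
  have hsumc : ∑ j, c j ≤ (d : ℝ) := by
    have h1 : ∑ j, c j = (Matrix.trace (star W * P * W)).re := by
      rw [Matrix.trace, Complex.re_sum]; rfl
    have h2 : Matrix.trace (star W * P * W) = Matrix.trace P := by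
      rw [Matrix.trace_mul_comm, ← Matrix.mul_assoc, hW2, Matrix.one_mul]
    have h3 : (Matrix.trace P).re = ∑ j, χ j := by
      rw [hPdef, trace_UDU hU1, Complex.re_sum]; simp
    have h4 : ∑ j, χ j = (d : ℝ) := by
      have := sum_perm_filter (D := D) (d := d) (fun _ => (1:ℝ)) e
      simp only [one_mul] at this
      rw [hχdef]
      rw [this, Finset.sum_const, nsmul_eq_mul, mul_one, card_filter_lt D d hdD]
    rw [h1, h2, h3, h4]
  have htrBP : (Matrix.trace ((X + Y) * (X + Y)ᴴ * P)).re = ∑ j, mu j * c j := by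
    rw [hBspec]
    have h1 : W * Matrix.diagonal (fun j => (mu j : ℂ)) * star W * P
        = W * (Matrix.diagonal (fun j => (mu j : ℂ)) * (star W * P)) := by
      simp only [Matrix.mul_assoc]
    have h2 : (Matrix.diagonal (fun j => (mu j : ℂ)) * (star W * P)) * W
        = Matrix.diagonal (fun j => (mu j : ℂ)) * (star W * P * W) := by
      simp only [Matrix.mul_assoc]
    rw [h1, Matrix.trace_mul_comm, h2, trace_diagonal_mul, Complex.re_sum]
    refine Finset.sum_congr rfl fun j _ => ?_
    rw [Complex.re_ofReal_mul]
  have hmuf_anti : Antitone (fun i => mu (f i)) := by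
    intro i j hij
    show mu (f j) ≤ mu (f i)
    have h1 : ∀ k, mu (f k) = σXY k ^ 2 := by
      intro k
      rw [hf]
      simp only [Function.comp_apply, singVals]
      rw [Real.sq_sqrt (hmu0 _)]
    rw [h1 i, h1 j]
    have := hσXY hij
    have h0 : 0 ≤ σXY j := by
      rw [hf]; exact Real.sqrt_nonneg _
    nlinarith
  have hmajor : ∑ j, mu j * c j
      ≤ ∑ i ∈ Finset.univ.filter (fun i : Fin D => (i : ℕ) < d), mu (f i) := by
    have h1 : ∑ j, mu j * c j = ∑ i, mu (f i) * c (f i) :=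
      (Equiv.sum_comp f (fun j => mu j * c j)).symm
    rw [h1]
    exact majorization d hdD (fun i => mu (f i)) (fun i => c (f i)) hmuf_anti
      (fun i => hmu0 _) (fun i => hc0 _) (fun i => hc1 _)
      (by rw [Equiv.sum_comp f c]; exact hsumc)
  have hKyFan : ∑ i ∈ Finset.univ.filter (fun i : Fin D => d ≤ (i : ℕ)), mu (f i)
      ≤ F2 ((1 - P) * (X + Y)) := by
    rw [F2_idem_mul hPh' hPP' (X + Y), Matrix.mul_sub, Matrix.mul_one, Matrix.trace_sub,
      Complex.sub_re, htrBP]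
    have h1 : (Matrix.trace ((X + Y) * (X + Y)ᴴ)).re = ∑ j, mu j := by
      rw [hBspec, trace_UDU hW1, Complex.re_sum]; simp
    rw [h1, sum_split_perm (d := d) mu f]
    linarith
  -- assembling
  set R := X + Y - P * X with hRdef
  have hR1 : (1 - P) * R = (1 - P) * (X + Y) := by
    rw [hRdef, Matrix.mul_sub]
    have : (1 - P) * (P * X) = 0 := by
      rw [← Matrix.mul_assoc, Matrix.sub_mul, Matrix.one_mul, hPP, sub_self, Matrix.zero_mul]
    rw [this, sub_zero]
  have hR2 : R = (1 - P) * X + Y := by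
    rw [hRdef, Matrix.sub_mul, Matrix.one_mul]
    abel
  have hF2R : F2 ((1 - P) * (X + Y)) ≤ F2 R := by
    rw [← hR1]
    have := F2_proj_split hPh hPP R
    have h0 := F2_nonneg (P * R)
    linarith
  -- tail sums in terms of eigenvalues
  have hTailXY : ∑ i ∈ Finset.univ.filter (fun i : Fin D => d ≤ (i : ℕ)), σXY i ^ 2
      = ∑ i ∈ Finset.univ.filter (fun i : Fin D => d ≤ (i : ℕ)), mu (f i) := by
    refine Finset.sum_congr rfl fun i _ => ?_
    rw [hf]
    simp only [Function.comp_apply, singVals]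
    rw [Real.sq_sqrt (hmu0 _)]
  have hTailX : ∑ i ∈ Finset.univ.filter (fun i : Fin D => d ≤ (i : ℕ)), σX i ^ 2
      = ∑ i ∈ Finset.univ.filter (fun i : Fin D => d ≤ (i : ℕ)), lam (e i) := by
    refine Finset.sum_congr rfl fun i _ => ?_
    rw [he]
    simp only [Function.comp_apply, singVals]
    rw [Real.sq_sqrt (hlam0 _)]
  have step1 : Real.sqrt (∑ i ∈ Finset.univ.filter (fun i : Fin D => d ≤ (i : ℕ)), σXY i ^ 2)
      ≤ frob R := by
    rw [hTailXY, frob_eq_sqrt_F2]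
    apply Real.sqrt_le_sqrt
    linarith
  have step2 : frob R ≤ Real.sqrt (∑ i ∈ Finset.univ.filter
      (fun i : Fin D => d ≤ (i : ℕ)), σX i ^ 2) + frob Y := by
    rw [hR2, hTailX, ← hF2X, ← frob_eq_sqrt_F2]
    exact frob_add_le _ _
  have hsqrt2 : (1 : ℝ) ≤ Real.sqrt 2 := by
    rw [show (1:ℝ) = Real.sqrt 1 by simp]
    exact Real.sqrt_le_sqrt one_le_two
  have hnn1 : 0 ≤ Real.sqrt (∑ i ∈ Finset.univ.filter
      (fun i : Fin D => d ≤ (i : ℕ)), σX i ^ 2) := Real.sqrt_nonneg _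
  have hnn2 : 0 ≤ frob Y := Real.sqrt_nonneg _
  nlinarith [step1, step2]
end
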